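/- Over the field ℝ of real numbers, a formal power series f(z) = a₁z + a₂z² + ⋯ with a₁ ≠ 0 of finite compositional order has order 1 or 2; if it has order 2 then a₁ = −1. -/

import Mathlib

open PowerSeries

/-- Composition (substitution) of formal power series: coefficient formula,
valid for `g` with zero constant term. -/
noncomputable def PS.comp {F : Type*} [CommRing F] (f g : PowerSeries F) : PowerSeries F :=
  PowerSeries.mk fun k =>
    ∑ n ∈ Finset.range (k + 1), (PowerSeries.coeff n f) * (PowerSeries.coeff k (g ^ n))

/-- The group `G` of series with zero constant term and nonzero linear coefficient. -/
def PS.G (F : Type*) [CommRing F] : Set (PowerSeries F) :=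
  {f | PowerSeries.constantCoeff f = 0 ∧ PowerSeries.coeff 1 f ≠ 0}

/-- `n`-fold compositional iterate of `f`. -/
noncomputable def PS.iter {F : Type*} [CommRing F] (f : PowerSeries F) : ℕ → PowerSeries F
  | 0 => PowerSeries.X
  | n + 1 => PS.comp f (PS.iter f n)

/-- `f` has compositional order exactly `n`. -/
def PS.HasOrder {F : Type*} [CommRing F] (f : PowerSeries F) (n : ℕ) : Prop :=
  PS.iter f n = PowerSeries.X ∧ ∀ m, 0 < m → m < n → PS.iter f m ≠ PowerSeries.X

namespace PSAux

variable {F : Type*} [CommRing F]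

theorem coeff_comp (f g : PowerSeries F) (k : ℕ) :
    PowerSeries.coeff k (PS.comp f g) =
      ∑ n ∈ Finset.range (k + 1), (PowerSeries.coeff n f) * (PowerSeries.coeff k (g ^ n)) := by
  simp [PS.comp]

theorem coeff_pow_eq_zero {g : PowerSeries F} (hg : PowerSeries.constantCoeff g = 0)
    {k n : ℕ} (h : k < n) : PowerSeries.coeff k (g ^ n) = 0 := by
  have hX : (PowerSeries.X : PowerSeries F) ∣ g := PowerSeries.X_dvd_iff.mpr hg
  have : (PowerSeries.X : PowerSeries F) ^ n ∣ g ^ n := pow_dvd_pow_of_dvd hX n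
  exact PowerSeries.X_pow_dvd_iff.mp this k h

theorem coeff_comp' (f g : PowerSeries F) (hg : PowerSeries.constantCoeff g = 0)
    {k N : ℕ} (hN : k + 1 ≤ N) :
    PowerSeries.coeff k (PS.comp f g) =
      ∑ n ∈ Finset.range N, (PowerSeries.coeff n f) * (PowerSeries.coeff k (g ^ n)) := by
  rw [coeff_comp]
  refine Finset.sum_subset (Finset.range_subset_range.mpr hN) ?_
  intro n hn hn'
  simp only [Finset.mem_range, not_lt] at hn hn'
  rw [coeff_pow_eq_zero hg (by omega), mul_zero]

theorem coeff_aeval (g : PowerSeries F) (hg : PowerSeries.constantCoeff g = 0)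
    (p : Polynomial F) (k : ℕ) :
    PowerSeries.coeff k (Polynomial.aeval g p) =
      ∑ i ∈ Finset.range (k + 1), p.coeff i * PowerSeries.coeff k (g ^ i) := by
  set M := max (p.natDegree + 1) (k + 1) with hM
  rw [Polynomial.aeval_eq_sum_range' (n := M) (by omega) g]
  rw [map_sum]
  have h1 : ∀ i ∈ Finset.range M,
      PowerSeries.coeff k (p.coeff i • g ^ i) = p.coeff i * PowerSeries.coeff k (g ^ i) := by
    intro i _
    rw [PowerSeries.coeff_smul, smul_eq_mul]
  rw [Finset.sum_congr rfl h1]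
  symm
  refine Finset.sum_subset (Finset.range_subset_range.mpr (by omega)) ?_
  intro i hi hi'
  simp only [Finset.mem_range, not_lt] at hi hi'
  rw [coeff_pow_eq_zero hg (by omega), mul_zero]

theorem comp_mul (a b g : PowerSeries F) (hg : PowerSeries.constantCoeff g = 0) :
    PS.comp (a * b) g = PS.comp a g * PS.comp b g := by
  ext k
  set N := k + 1 with hN
  have key : ∀ c : PowerSeries F, ∀ p ≤ k, PowerSeries.coeff p (PS.comp c g)
      = PowerSeries.coeff p (Polynomial.aeval g (PowerSeries.trunc N c)) := by
    intro c p hp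
    rw [coeff_aeval g hg, coeff_comp]
    refine Finset.sum_congr rfl ?_
    intro i hi
    simp only [Finset.mem_range] at hi
    rw [PowerSeries.coeff_trunc, if_pos (by omega)]
  rw [key _ k le_rfl]
  have htr : ∀ i ≤ k, (PowerSeries.trunc N (a * b)).coeff i
      = (PowerSeries.trunc N a * PowerSeries.trunc N b).coeff i := by
    intro i hi
    rw [Polynomial.coeff_mul, PowerSeries.coeff_trunc, if_pos (by omega),
      PowerSeries.coeff_mul]
    refine Finset.sum_congr rfl ?_
    intro x hx
    rw [Finset.HasAntidiagonal.mem_antidiagonal] at hx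
    rw [PowerSeries.coeff_trunc, if_pos (by omega), PowerSeries.coeff_trunc, if_pos (by omega)]
  have h2 : PowerSeries.coeff k (Polynomial.aeval g (PowerSeries.trunc N (a * b)))
      = PowerSeries.coeff k (Polynomial.aeval g (PowerSeries.trunc N a * PowerSeries.trunc N b)) := by
    rw [coeff_aeval g hg, coeff_aeval g hg]
    refine Finset.sum_congr rfl ?_
    intro i hi
    simp only [Finset.mem_range] at hi
    rw [htr i (by omega)]
  rw [h2, map_mul, PowerSeries.coeff_mul, PowerSeries.coeff_mul]
  refine Finset.sum_congr rfl ?_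
  intro x hx
  rw [Finset.HasAntidiagonal.mem_antidiagonal] at hx
  rw [← key a x.1 (by omega), ← key b x.2 (by omega)]

theorem comp_one (g : PowerSeries F) : PS.comp (1 : PowerSeries F) g = 1 := by
  ext k
  rw [coeff_comp]
  simp [PowerSeries.coeff_one, ite_mul, Finset.sum_ite_eq']

theorem comp_pow (a g : PowerSeries F) (hg : PowerSeries.constantCoeff g = 0) (n : ℕ) :
    PS.comp (a ^ n) g = (PS.comp a g) ^ n := by
  induction n with
  | zero => simpa using comp_one g
  | succ n ih => rw [pow_succ, comp_mul _ _ _ hg, ih, pow_succ]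

theorem comp_assoc (f g h : PowerSeries F) (hg : PowerSeries.constantCoeff g = 0)
    (hh : PowerSeries.constantCoeff h = 0) :
    PS.comp (PS.comp f g) h = PS.comp f (PS.comp g h) := by
  ext k
  rw [coeff_comp, coeff_comp]
  have L : ∀ m ∈ Finset.range (k + 1),
      PowerSeries.coeff m (PS.comp f g) * PowerSeries.coeff k (h ^ m)
      = ∑ n ∈ Finset.range (k + 1), PowerSeries.coeff n f *
          (PowerSeries.coeff m (g ^ n) * PowerSeries.coeff k (h ^ m)) := by
    intro m hm
    simp only [Finset.mem_range] at hm
    rw [coeff_comp' f g hg (k := m) (N := k + 1) (by omega), Finset.sum_mul]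
    simp [mul_assoc]
  have R : ∀ n ∈ Finset.range (k + 1),
      PowerSeries.coeff n f * PowerSeries.coeff k ((PS.comp g h) ^ n)
      = ∑ m ∈ Finset.range (k + 1), PowerSeries.coeff n f *
          (PowerSeries.coeff m (g ^ n) * PowerSeries.coeff k (h ^ m)) := by
    intro n hn
    rw [← comp_pow g h hh n, coeff_comp, Finset.mul_sum]
  rw [Finset.sum_congr rfl L, Finset.sum_congr rfl R, Finset.sum_comm]

theorem comp_X_right (f : PowerSeries F) : PS.comp f PowerSeries.X = f := by
  ext k
  rw [coeff_comp]
  simp [PowerSeries.coeff_X_pow, Finset.sum_ite_eq']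

theorem comp_X_left (g : PowerSeries F) (hg : PowerSeries.constantCoeff g = 0) :
    PS.comp PowerSeries.X g = g := by
  ext k
  rw [coeff_comp]
  cases k with
  | zero =>
      rw [Finset.sum_range_one]
      simp [PowerSeries.coeff_X, PowerSeries.coeff_zero_eq_constantCoeff, hg]
  | succ k =>
      simp [PowerSeries.coeff_X, ite_mul, Finset.sum_ite_eq']

end PSAux

namespace PSAux

variable {F : Type*} [CommRing F]

theorem constCoeff_comp (f g : PowerSeries F) (hf : PowerSeries.constantCoeff f = 0) :
    PowerSeries.constantCoeff (PS.comp f g) = 0 := by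
  have h := coeff_comp f g 0
  rw [Finset.sum_range_one] at h
  rw [← PowerSeries.coeff_zero_eq_constantCoeff_apply] at *
  simp [h, hf]

theorem constCoeff_iter (f : PowerSeries F) (hf : PowerSeries.constantCoeff f = 0) (m : ℕ) :
    PowerSeries.constantCoeff (PS.iter f m) = 0 := by
  induction m with
  | zero => simp [PS.iter]
  | succ m ih => exact constCoeff_comp _ _ hf

theorem coeff_one_comp (f g : PowerSeries F) (hg : PowerSeries.constantCoeff g = 0) :
    PowerSeries.coeff 1 (PS.comp f g) = PowerSeries.coeff 1 f * PowerSeries.coeff 1 g := by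
  rw [coeff_comp]
  rw [show (1:ℕ)+1 = 2 from rfl, Finset.sum_range_succ, Finset.sum_range_one]
  simp [PowerSeries.coeff_one]

theorem coeff_one_iter (f : PowerSeries F) (hf : PowerSeries.constantCoeff f = 0) (m : ℕ) :
    PowerSeries.coeff 1 (PS.iter f m) = (PowerSeries.coeff 1 f) ^ m := by
  induction m with
  | zero => simp [PS.iter]
  | succ m ih =>
      rw [PS.iter, coeff_one_comp _ _ (constCoeff_iter f hf m), ih, pow_succ]
      ring

theorem iter_add (f : PowerSeries F) (hf : PowerSeries.constantCoeff f = 0) (a b : ℕ) :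
    PS.iter f (a + b) = PS.comp (PS.iter f a) (PS.iter f b) := by
  induction a with
  | zero => rw [Nat.zero_add]; exact (comp_X_left _ (constCoeff_iter f hf b)).symm
  | succ a ih =>
      have h : a + 1 + b = (a + b) + 1 := by omega
      rw [h, PS.iter, ih, ← comp_assoc f _ _ (constCoeff_iter f hf a) (constCoeff_iter f hf b)]
      rfl

theorem iter_iter (f : PowerSeries F) (hf : PowerSeries.constantCoeff f = 0) (a m : ℕ) :
    PS.iter (PS.iter f a) m = PS.iter f (a * m) := by
  induction m with
  | zero => simp [PS.iter]
  | succ m ih =>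
      rw [PS.iter, ih, ← iter_add f hf a (a * m)]
      congr 1
      ring

/-- shape: f = X + (terms of degree ≥ k) -/
def Shape (k : ℕ) (f : PowerSeries F) : Prop :=
  PowerSeries.constantCoeff f = 0 ∧ PowerSeries.coeff 1 f = 1 ∧
    ∀ j, 2 ≤ j → j < k → PowerSeries.coeff j f = 0

theorem shape_pow {k : ℕ} (hk : 2 ≤ k) {g : PowerSeries F} (hg : Shape k g)
    {i j : ℕ} (hi : 2 ≤ i) (hj : j ≤ k) :
    PowerSeries.coeff j (g ^ i) = if j = i then 1 else 0 := by
  obtain ⟨hg0, hg1, hgj⟩ := hg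
  have hd : (PowerSeries.X : PowerSeries F) ^ k ∣ (g - PowerSeries.X) := by
    rw [PowerSeries.X_pow_dvd_iff]
    intro m hm
    rw [map_sub, PowerSeries.coeff_X]
    match m, hm with
    | 0, _ => simp [PowerSeries.coeff_zero_eq_constantCoeff, hg0]
    | 1, _ => simp [hg1]
    | (m+2), hm => simp [hgj (m+2) (by omega) hm]
  have hXg : (PowerSeries.X : PowerSeries F) ∣ g := PowerSeries.X_dvd_iff.mpr hg0
  have hsum : (PowerSeries.X : PowerSeries F) ^ (i - 1) ∣
      ∑ t ∈ Finset.range i, g ^ t * PowerSeries.X ^ (i - 1 - t) := by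
    refine Finset.dvd_sum ?_
    intro t ht
    rw [Finset.mem_range] at ht
    have h : (PowerSeries.X : PowerSeries F) ^ (i-1)
        = PowerSeries.X ^ t * PowerSeries.X ^ (i-1-t) := by
      rw [← pow_add]; congr 1; omega
    rw [h]
    exact mul_dvd_mul (pow_dvd_pow_of_dvd hXg t) dvd_rfl
  have hdvd : (PowerSeries.X : PowerSeries F) ^ (i - 1 + k) ∣ g ^ i - PowerSeries.X ^ i := by
    rw [← geom_sum₂_mul g PowerSeries.X i, pow_add]
    exact mul_dvd_mul hsum hd
  have hco : PowerSeries.coeff j (g ^ i - PowerSeries.X ^ i) = 0 :=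
    PowerSeries.X_pow_dvd_iff.mp hdvd j (by omega)
  rw [map_sub, sub_eq_zero] at hco
  rw [hco, PowerSeries.coeff_X_pow]

theorem comp_coeff_mid {k : ℕ} (hk : 2 ≤ k) {f g : PowerSeries F}
    (hf : Shape k f) (hg : Shape k g) {j : ℕ} (hj2 : 2 ≤ j) (hjk : j ≤ k) :
    PowerSeries.coeff j (PS.comp f g) = PowerSeries.coeff j g + PowerSeries.coeff j f := by
  rw [coeff_comp]
  have point : ∀ i ∈ Finset.range (j + 1),
      PowerSeries.coeff i f * PowerSeries.coeff j (g ^ i)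
      = (if i = 1 then PowerSeries.coeff j g else 0)
        + (if i = j then PowerSeries.coeff j f else 0) := by
    intro i hi
    rw [Finset.mem_range] at hi
    match i, hi with
    | 0, _ =>
        have h0 : PowerSeries.coeff 0 f = 0 := by
          rw [PowerSeries.coeff_zero_eq_constantCoeff]; exact hf.1
        rw [h0, zero_mul, if_neg (by omega : ¬(0:ℕ) = 1), if_neg (by omega : ¬0 = j), add_zero]
    | 1, _ =>
        rw [hf.2.1, one_mul, pow_one, if_pos rfl, if_neg (by omega : ¬1 = j), add_zero]
    | (i+2), hi =>
        rw [shape_pow hk hg (by omega) hjk]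
        rcases eq_or_ne (i+2) j with h | h
        · rw [if_pos h, if_pos (by omega), if_neg (by omega), h, mul_one, zero_add]
        · have hlt : i + 2 < j := by omega
          rw [if_neg (by omega), if_neg h, if_neg (by omega), mul_zero, add_zero]
  rw [Finset.sum_congr rfl point, Finset.sum_add_distrib,
    Finset.sum_ite_eq' (Finset.range (j+1)), Finset.sum_ite_eq' (Finset.range (j+1)),
    if_pos (by simp; omega), if_pos (by simp)]

theorem shape_comp {k : ℕ} (hk : 2 ≤ k) {f g : PowerSeries F}
    (hf : Shape k f) (hg : Shape k g) :
    Shape k (PS.comp f g) ∧ PowerSeries.coeff k (PS.comp f g)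
      = PowerSeries.coeff k f + PowerSeries.coeff k g := by
  refine ⟨⟨constCoeff_comp _ _ hf.1, ?_, ?_⟩, ?_⟩
  · rw [coeff_one_comp _ _ hg.1, hf.2.1, hg.2.1, mul_one]
  · intro j hj2 hjk
    rw [comp_coeff_mid hk hf hg hj2 (by omega), hf.2.2 j hj2 hjk, hg.2.2 j hj2 hjk, add_zero]
  · rw [comp_coeff_mid hk hf hg hk le_rfl, add_comm]

theorem shape_X {k : ℕ} (hk : 2 ≤ k) : Shape k (PowerSeries.X : PowerSeries F) := by
  refine ⟨by simp, by simp, ?_⟩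
  intro j hj2 _
  rw [PowerSeries.coeff_X, if_neg (by omega)]

theorem shape_iter {k : ℕ} (hk : 2 ≤ k) {f : PowerSeries F} (hf : Shape k f) (m : ℕ) :
    Shape k (PS.iter f m) ∧ PowerSeries.coeff k (PS.iter f m)
      = (m : F) * PowerSeries.coeff k f := by
  induction m with
  | zero =>
      refine ⟨shape_X hk, ?_⟩
      show PowerSeries.coeff k PowerSeries.X = _
      rw [PowerSeries.coeff_X, if_neg (by omega)]
      simp
  | succ m ih =>
      obtain ⟨hsh, hco⟩ := ih
      obtain ⟨hsh', hco'⟩ := shape_comp hk hf hsh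
      refine ⟨hsh', ?_⟩
      show PowerSeries.coeff k (PS.comp f (PS.iter f m)) = _
      rw [hco', hco]
      push_cast
      ring

end PSAux

namespace PSAux

theorem comp_X_right' {F : Type*} [CommRing F] (f : PowerSeries F) :
    PS.iter f 1 = f := by
  show PS.comp f (PS.iter f 0) = f
  show PS.comp f PowerSeries.X = f
  exact comp_X_right f

theorem order_one_of_coeff_one (f : PowerSeries ℝ)
    (hf0 : PowerSeries.constantCoeff f = 0) (hf1 : PowerSeries.coeff 1 f = 1)
    {n : ℕ} (hn : 0 < n) (h : PS.iter f n = PowerSeries.X) : f = PowerSeries.X := by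
  by_contra hne
  have hex : ∃ k, PowerSeries.coeff k f ≠ PowerSeries.coeff k PowerSeries.X := by
    by_contra hc
    push_neg at hc
    exact hne (PowerSeries.ext hc)
  classical
  set k := Nat.find hex with hkdef
  have hk : PowerSeries.coeff k f ≠ PowerSeries.coeff k PowerSeries.X := Nat.find_spec hex
  have hmin : ∀ j < k, PowerSeries.coeff j f = PowerSeries.coeff j PowerSeries.X := by
    intro j hj
    have : j < Nat.find hex := by omega
    exact not_not.mp (Nat.find_min hex this)
  have hk2 : 2 ≤ k := by
    rcases Nat.lt_or_ge k 2 with h2 | h2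
    · interval_cases k
      · exact (hk (by rw [PowerSeries.coeff_zero_eq_constantCoeff_apply, hf0,
          PowerSeries.coeff_zero_eq_constantCoeff_apply, PowerSeries.constantCoeff_X])).elim
      · exact (hk (by rw [hf1, PowerSeries.coeff_one_X])).elim
    · exact h2
  have hsh : Shape k f := by
    refine ⟨hf0, hf1, ?_⟩
    intro j hj2 hjk
    rw [hmin j hjk, PowerSeries.coeff_X, if_neg (by omega)]
  have hkX : PowerSeries.coeff k (PowerSeries.X : PowerSeries ℝ) = 0 := by
    rw [PowerSeries.coeff_X, if_neg (by omega)]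
  have hfk : PowerSeries.coeff k f ≠ 0 := by rw [hkX] at hk; exact hk
  have := (shape_iter hk2 hsh n).2
  rw [h, hkX] at this
  have hcast : (n : ℝ) ≠ 0 := Nat.cast_ne_zero.mpr (by omega)
  exact hfk (by
    have := this.symm
    rcases mul_eq_zero.mp this with h' | h'
    · exact absurd h' hcast
    · exact h')

end PSAux


theorem stmt_15 (f : PowerSeries ℝ) (hf : f ∈ PS.G ℝ) (n : ℕ) (hn : 0 < n)
    (hord : PS.HasOrder f n) :
    (n = 1 ∨ n = 2) ∧ (n = 2 → PowerSeries.coeff 1 f = -1) := by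
  obtain ⟨hf0, hf1⟩ := hf
  set c := PowerSeries.coeff 1 f with hc
  have hcn : c ^ n = 1 := by
    have h := PSAux.coeff_one_iter f hf0 n
    rw [hord.1, PowerSeries.coeff_one_X] at h
    exact h.symm
  have hcases : c = 1 ∨ c = -1 := by
    rcases (pow_eq_one_iff_cases (a := c) (n := n)).mp hcn with h | h | h
    · omega
    · exact Or.inl h
    · exact Or.inr h.1
  rcases hcases with h1 | h1
  · -- c = 1 : f = X, so n = 1
    have hX : f = PowerSeries.X :=
      PSAux.order_one_of_coeff_one f hf0 (by rw [← hc, h1]) hn hord.1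
    have h1iter : PS.iter f 1 = PowerSeries.X := by
      rw [PSAux.comp_X_right', hX]
    have hn1 : n = 1 := by
      by_contra hne
      exact hord.2 1 one_pos (by omega) h1iter
    exact ⟨Or.inl hn1, fun h2 => by omega⟩
  · -- c = -1
    have hne1 : n ≠ 1 := by
      intro h
      have hfX : f = PowerSeries.X := by
        rw [← PSAux.comp_X_right' f]
        rw [h] at hord
        exact hord.1
      rw [hfX, PowerSeries.coeff_one_X] at hc
      rw [hc] at h1
      norm_num at h1
    have heven : Even n := by
      by_contra hodd
      have hodd' : Odd n := (Nat.even_or_odd n).resolve_left hodd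
      rw [h1, hodd'.neg_one_pow] at hcn
      norm_num at hcn
    obtain ⟨m, hm⟩ := heven
    have hm1 : 0 < m := by omega
    set g := PS.iter f 2 with hg
    have hg0 : PowerSeries.constantCoeff g = 0 := PSAux.constCoeff_iter f hf0 2
    have hg1 : PowerSeries.coeff 1 g = 1 := by
      rw [hg, PSAux.coeff_one_iter f hf0 2, ← hc, h1]
      norm_num
    have hgiter : PS.iter g m = PowerSeries.X := by
      rw [hg, PSAux.iter_iter f hf0 2 m, show 2 * m = n by omega, hord.1]
    have hgX : g = PowerSeries.X := PSAux.order_one_of_coeff_one g hg0 hg1 hm1 hgiter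
    have hn2 : n = 2 := by
      by_contra hne
      have h2n : 2 < n := by omega
      exact hord.2 2 (by omega) h2n (by rw [← hg, hgX])
    exact ⟨Or.inr hn2, fun _ => h1⟩
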